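/- If ρ is a fully separable r-party density matrix, then for every permutation σ of {1,…,2r}, the trace norm of the matrix Λ_σ(ρ) obtained by permuting the tensor indices of ρ according to σ satisfies ‖Λ_σ(ρ)‖₁ ≤ 1. -/

import Mathlib

open scoped BigOperators ComplexConjugate ComplexOrder
open Matrix

noncomputable section

/-- The trace norm (sum of singular values) of a complex matrix. -/
def traceNorm {n : Type*} [Fintype n] [DecidableEq n] (A : Matrix n n ℂ) : ℝ :=
  ∑ i, Real.sqrt ((Matrix.posSemidef_conjTranspose_mul_self A).1.eigenvalues i)

/-- An `r`-party state on `(ℂ^d)^{⊗r}` is fully separable if it is a convex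
combination of tensor products of `r` pure one-party unit states. -/
def FullySeparable (r d : ℕ) (ρ : Matrix (Fin r → Fin d) (Fin r → Fin d) ℂ) : Prop :=
  ∃ (m : ℕ) (p : Fin m → ℝ) (φ : Fin m → Fin r → Fin d → ℂ),
    (∀ t, 0 ≤ p t) ∧ (∑ t, p t = 1) ∧
    (∀ t w, ∑ i, ‖φ t w i‖ ^ 2 = 1) ∧
    ∀ x y, ρ x y = ∑ t, (p t : ℂ) * ∏ w, (φ t w (x w) * conj (φ t w (y w)))

/-- The map `Λ_σ` permuting the `2r` tensor indices of an `r`-party density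
matrix according to `σ`.  Index `(w, false)` is the ket index of party `w`
and `(w, true)` the bra index. -/
def permuteIdx (r d : ℕ) (σ : Equiv.Perm (Fin r × Bool))
    (ρ : Matrix (Fin r → Fin d) (Fin r → Fin d) ℂ) :
    Matrix (Fin r → Fin d) (Fin r → Fin d) ℂ :=
  fun x y =>
    ρ (fun w => (fun p : Fin r × Bool => if p.2 then y p.1 else x p.1) (σ (w, false)))
      (fun w => (fun p : Fin r × Bool => if p.2 then y p.1 else x p.1) (σ (w, true)))

namespace PermCrit

set_option linter.unusedSectionVars false

variable {n : Type*} [Fintype n] [DecidableEq n]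

local notation "⟪" x ", " y "⟫" => @inner ℂ _ _ x y

abbrev mk : (n → ℂ) ≃ₗ[ℂ] EuclideanSpace ℂ n := (WithLp.linearEquiv 2 ℂ (n → ℂ)).symm

lemma inner_mk (a b : n → ℂ) : (⟪mk a, mk b⟫ : ℂ) = ∑ i, conj (a i) * b i := by
  simp [mk, PiLp.inner_apply, mul_comm]

lemma norm_mk_sq (a : n → ℂ) : ‖mk a‖ ^ 2 = ∑ i, ‖a i‖ ^ 2 := by
  rw [EuclideanSpace.norm_eq, Real.sq_sqrt (by positivity)]
  rfl

lemma inner_mulVec (A : Matrix n n ℂ) (w z : n → ℂ) :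
    (⟪mk (A *ᵥ w), mk (A *ᵥ z)⟫ : ℂ) = ⟪mk w, mk ((Aᴴ * A) *ᵥ z)⟫ := by
  rw [inner_mk, inner_mk]
  show dotProduct (star (A *ᵥ w)) (A *ᵥ z) = dotProduct (star w) ((Aᴴ * A) *ᵥ z)
  rw [star_mulVec]
  simp [dotProduct_mulVec, vecMul_vecMul]

lemma key (A : Matrix n n ℂ) {m : ℕ} (p : Fin m → ℝ) (u v : Fin m → n → ℂ)
    (hp : ∀ t, 0 ≤ p t) (hps : ∑ t, p t = 1)
    (hu : ∀ t, ∑ x, ‖u t x‖ ^ 2 ≤ 1) (hv : ∀ t, ∑ y, ‖v t y‖ ^ 2 ≤ 1)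
    (hA : ∀ x y, A x y = ∑ t, (p t : ℂ) * (u t x * v t y)) :
    traceNorm A ≤ 1 := by
  classical
  have hPSD := Matrix.posSemidef_conjTranspose_mul_self A
  let hH := hPSD.1
  let lam : n → ℝ := hH.eigenvalues
  let f : n → EuclideanSpace ℂ n := fun i => hH.eigenvectorBasis i
  let fv : n → n → ℂ := fun i => WithLp.equiv 2 (n → ℂ) (f i)
  have hmkfv : ∀ i, mk (fv i) = f i := fun i => (WithLp.equiv 2 (n → ℂ)).symm_apply_apply _
  have hfo : Orthonormal ℂ f := hH.eigenvectorBasis.orthonormal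
  have heig : ∀ i, (Aᴴ * A) *ᵥ fv i = lam i • fv i := fun i => hH.mulVec_eigenvectorBasis i
  have hinner_eig : ∀ i j, (⟪mk (A *ᵥ fv i), mk (A *ᵥ fv j)⟫ : ℂ) = (lam j : ℂ) * ⟪f i, f j⟫ := by
    intro i j
    rw [inner_mulVec, heig, RCLike.real_smul_eq_coe_smul (K := ℂ), _root_.map_smul,
      inner_smul_right, hmkfv, hmkfv]
    rfl
  -- trace norm as sum of norms
  have hAfn : ∀ i, ‖mk (A *ᵥ fv i)‖ = Real.sqrt (lam i) := by
    intro i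
    rw [norm_eq_sqrt_re_inner (𝕜 := ℂ), hinner_eig]
    congr 1
    rw [inner_self_eq_norm_sq_to_K, hfo.1 i]
    simp
  have htr : traceNorm A = ∑ i, ‖mk (A *ᵥ fv i)‖ :=
    Finset.sum_congr rfl fun i _ => (hAfn i).symm
  -- the left singular vectors
  let e : n → EuclideanSpace ℂ n :=
    fun i => ((‖mk (A *ᵥ fv i)‖⁻¹ : ℝ) : ℂ) • mk (A *ᵥ fv i)
  have hrep : ∀ i, ‖mk (A *ᵥ fv i)‖ = (⟪e i, mk (A *ᵥ fv i)⟫ : ℂ).re := by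
    intro i
    by_cases h : mk (A *ᵥ fv i) = 0
    · simp [e, h]
    · have hn : ‖mk (A *ᵥ fv i)‖ ≠ 0 := norm_ne_zero_iff.2 h
      simp only [e, inner_smul_left, Complex.conj_ofReal, inner_self_eq_norm_sq_to_K,
        ← Complex.ofReal_pow, ← Complex.ofReal_mul, Complex.ofReal_re]
      rw [sq]
      field_simp
      simp [Complex.re_ofReal_mul, ← Complex.ofReal_pow]
      field_simp
  -- Bessel inequality for the (partial) orthonormal family `e`
  have hbessel : ∀ z : EuclideanSpace ℂ n, ∑ i, ‖(⟪e i, z⟫ : ℂ)‖ ^ 2 ≤ ‖z‖ ^ 2 := by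
    intro z
    set S : Finset n := Finset.univ.filter (fun i => mk (A *ᵥ fv i) ≠ 0) with hS
    have hsub : ∑ i, ‖(⟪e i, z⟫ : ℂ)‖ ^ 2 = ∑ i ∈ S, ‖(⟪e i, z⟫ : ℂ)‖ ^ 2 := by
      refine (Finset.sum_subset (Finset.subset_univ S) ?_).symm
      intro i _ hi
      have h0 : mk (A *ᵥ fv i) = 0 := by
        by_contra hcon
        exact hi (Finset.mem_filter.2 ⟨Finset.mem_univ i, hcon⟩)
      have he0 : e i = 0 := by rw [show e i = ((‖mk (A *ᵥ fv i)‖⁻¹ : ℝ) : ℂ) • mk (A *ᵥ fv i) from rfl, h0, smul_zero]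
      simp [he0]
    rw [hsub]
    have horth : Orthonormal ℂ (fun i : {i // i ∈ S} => e i.1) := by
      constructor
      · intro i
        have hi : mk (A *ᵥ fv i.1) ≠ 0 := (Finset.mem_filter.1 i.2).2
        simpa [e] using norm_smul_inv_norm (𝕜 := ℂ) hi
      · intro i j hij
        have hne : (i : n) ≠ (j : n) := fun h => hij (Subtype.ext h)
        have h0 : (⟪mk (A *ᵥ fv i.1), mk (A *ᵥ fv j.1)⟫ : ℂ) = 0 := by
          rw [hinner_eig, hfo.2 hne, mul_zero]
        show (⟪e i.1, e j.1⟫ : ℂ) = 0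
        rw [show e i.1 = ((‖mk (A *ᵥ fv i.1)‖⁻¹ : ℝ) : ℂ) • mk (A *ᵥ fv i.1) from rfl,
          show e j.1 = ((‖mk (A *ᵥ fv j.1)‖⁻¹ : ℝ) : ℂ) • mk (A *ᵥ fv j.1) from rfl,
          inner_smul_left, inner_smul_right, h0, mul_zero, mul_zero]
    have hB := horth.sum_inner_products_le (s := Finset.univ) z
    calc ∑ i ∈ S, ‖(⟪e i, z⟫ : ℂ)‖ ^ 2
        = ∑ i : {i // i ∈ S}, ‖(⟪e i.1, z⟫ : ℂ)‖ ^ 2 := (Finset.sum_coe_sort S _).symm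
      _ ≤ ‖z‖ ^ 2 := hB
  -- expansion of `A *ᵥ fv i`
  let c : Fin m → n → ℂ := fun t i => ∑ y, v t y * fv i y
  have hAv : ∀ i, A *ᵥ fv i = ∑ t, ((p t : ℂ) * c t i) • u t := by
    intro i
    funext x
    simp only [mulVec, dotProduct, hA, Finset.sum_apply, Pi.smul_apply, smul_eq_mul,
      Finset.sum_mul]
    rw [Finset.sum_comm]
    refine Finset.sum_congr rfl fun t _ => ?_
    simp only [c, Finset.mul_sum, Finset.sum_mul]
    exact Finset.sum_congr rfl fun y _ => by ring
  have hinner : ∀ i, (⟪e i, mk (A *ᵥ fv i)⟫ : ℂ)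
      = ∑ t, ((p t : ℂ) * c t i) * ⟪e i, mk (u t)⟫ := by
    intro i
    conv_lhs => rw [hAv i]
    rw [map_sum, inner_sum]
    exact Finset.sum_congr rfl fun t _ => by rw [_root_.map_smul, inner_smul_right]
  -- Cauchy-Schwarz bound for each t
  have hCS : ∀ t, ∑ i, ‖c t i‖ * ‖(⟪e i, mk (u t)⟫ : ℂ)‖ ≤ 1 := by
    intro t
    have h1 : ∑ i, ‖c t i‖ ^ 2 ≤ 1 := by
      have hc : ∀ i, ‖c t i‖ = ‖(⟪f i, mk (fun y => conj (v t y))⟫ : ℂ)‖ := by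
        intro i
        rw [← norm_inner_symm, ← hmkfv i, inner_mk]
        congr 1
        exact Finset.sum_congr rfl fun y _ => by simp
      calc ∑ i, ‖c t i‖ ^ 2 = ∑ i, ‖(⟪f i, mk (fun y => conj (v t y))⟫ : ℂ)‖ ^ 2 := by
            exact Finset.sum_congr rfl fun i _ => by rw [hc]
        _ ≤ ‖mk (fun y => conj (v t y))‖ ^ 2 :=
            hfo.sum_inner_products_le (s := Finset.univ) _
        _ = ∑ y, ‖v t y‖ ^ 2 := by rw [norm_mk_sq]; simp
        _ ≤ 1 := hv t
    have h2 : ∑ i, ‖(⟪e i, mk (u t)⟫ : ℂ)‖ ^ 2 ≤ 1 := by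
      refine (hbessel (mk (u t))).trans ?_
      rw [norm_mk_sq]; exact hu t
    have h3 := Finset.sum_mul_sq_le_sq_mul_sq Finset.univ
      (fun i => ‖c t i‖) (fun i => ‖(⟪e i, mk (u t)⟫ : ℂ)‖)
    have h4 : (0:ℝ) ≤ ∑ i, ‖c t i‖ * ‖(⟪e i, mk (u t)⟫ : ℂ)‖ :=
      Finset.sum_nonneg fun i _ => mul_nonneg (norm_nonneg _) (norm_nonneg _)
    have h5 : (0:ℝ) ≤ ∑ i, ‖(⟪e i, mk (u t)⟫ : ℂ)‖ ^ 2 :=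
      Finset.sum_nonneg fun i _ => sq_nonneg _
    have hmul : (∑ i, ‖c t i‖ ^ 2) * (∑ i, ‖(⟪e i, mk (u t)⟫ : ℂ)‖ ^ 2) ≤ 1 :=
      mul_le_one₀ h1 h5 h2
    nlinarith [h3, h4, hmul]
  -- put everything together
  calc traceNorm A = ∑ i, (⟪e i, mk (A *ᵥ fv i)⟫ : ℂ).re := by
        rw [htr]; exact Finset.sum_congr rfl fun i _ => hrep i
    _ ≤ ∑ i, ∑ t, p t * (‖c t i‖ * ‖(⟪e i, mk (u t)⟫ : ℂ)‖) := by
        refine Finset.sum_le_sum fun i _ => ?_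
        rw [hinner i]
        calc (∑ t, ((p t : ℂ) * c t i) * ⟪e i, mk (u t)⟫).re
            ≤ ‖∑ t, ((p t : ℂ) * c t i) * ⟪e i, mk (u t)⟫‖ := Complex.re_le_norm _
          _ ≤ ∑ t, ‖((p t : ℂ) * c t i) * ⟪e i, mk (u t)⟫‖ := norm_sum_le _ _
          _ = ∑ t, p t * (‖c t i‖ * ‖(⟪e i, mk (u t)⟫ : ℂ)‖) := by
              refine Finset.sum_congr rfl fun t _ => ?_
              rw [norm_mul, norm_mul, Complex.norm_real, Real.norm_eq_abs,
                abs_of_nonneg (hp t), mul_assoc]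
    _ = ∑ t, p t * ∑ i, ‖c t i‖ * ‖(⟪e i, mk (u t)⟫ : ℂ)‖ := by
        rw [Finset.sum_comm]
        exact Finset.sum_congr rfl fun t _ => (Finset.mul_sum _ _ _).symm
    _ ≤ ∑ t, p t * 1 := Finset.sum_le_sum fun t _ =>
        mul_le_mul_of_nonneg_left (hCS t) (hp t)
    _ = 1 := by simp [hps]

end PermCrit

/-- The permutation separability criteria: for a fully separable state `ρ`
and any permutation `σ` of the `2r` tensor indices, `‖Λ_σ(ρ)‖₁ ≤ 1`. -/
theorem permutation_criterion (r d : ℕ)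
    (ρ : Matrix (Fin r → Fin d) (Fin r → Fin d) ℂ)
    (hsep : FullySeparable r d ρ) (σ : Equiv.Perm (Fin r × Bool)) :
    traceNorm (permuteIdx r d σ ρ) ≤ 1 := by
  classical
  obtain ⟨m, p, φ, hp, hps, hφ, hρ⟩ := hsep
  let ψ : Fin m → (Fin r × Bool) → Fin d → ℂ :=
    fun t q i => if q.2 then conj (φ t q.1 i) else φ t q.1 i
  let u : Fin m → (Fin r → Fin d) → ℂ := fun t x => ∏ w, ψ t (σ.symm (w, false)) (x w)
  let v : Fin m → (Fin r → Fin d) → ℂ := fun t y => ∏ w, ψ t (σ.symm (w, true)) (y w)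
  have hψnorm : ∀ t q, ∑ i, ‖ψ t q i‖ ^ 2 = 1 := by
    rintro t ⟨w, b⟩
    cases b <;> simp only [ψ] <;> simpa using hφ t w
  have hnorm : ∀ (b : Bool) t, ∑ x : Fin r → Fin d, ∏ w, ‖ψ t (σ.symm (w, b)) (x w)‖ ^ 2 ≤ 1 := by
    intro b t
    rw [← Fintype.prod_sum (fun w i => ‖ψ t (σ.symm (w, b)) i‖ ^ 2)]
    rw [Finset.prod_congr rfl fun w _ => hψnorm t (σ.symm (w, b))]
    simp
  apply PermCrit.key (permuteIdx r d σ ρ) p u v hp hps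
  · intro t
    calc ∑ x : Fin r → Fin d, ‖u t x‖ ^ 2
        = ∑ x : Fin r → Fin d, ∏ w, ‖ψ t (σ.symm (w, false)) (x w)‖ ^ 2 := by
          refine Finset.sum_congr rfl fun x _ => ?_
          rw [show u t x = ∏ w, ψ t (σ.symm (w, false)) (x w) from rfl, norm_prod,
            Finset.prod_pow]
      _ ≤ 1 := hnorm false t
  · intro t
    calc ∑ y : Fin r → Fin d, ‖v t y‖ ^ 2
        = ∑ y : Fin r → Fin d, ∏ w, ‖ψ t (σ.symm (w, true)) (y w)‖ ^ 2 := by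
          refine Finset.sum_congr rfl fun y _ => ?_
          rw [show v t y = ∏ w, ψ t (σ.symm (w, true)) (y w) from rfl, norm_prod,
            Finset.prod_pow]
      _ ≤ 1 := hnorm true t
  · intro x y
    rw [show permuteIdx r d σ ρ x y
        = ρ (fun w => (fun q : Fin r × Bool => if q.2 then y q.1 else x q.1) (σ (w, false)))
            (fun w => (fun q : Fin r × Bool => if q.2 then y q.1 else x q.1) (σ (w, true)))
      from rfl, hρ]
    refine Finset.sum_congr rfl fun t _ => ?_
    congr 1
    set E : Fin r × Bool → Fin d := fun q => if q.2 then y q.1 else x q.1 with hE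
    calc ∏ w, (φ t w (E (σ (w, false))) * conj (φ t w (E (σ (w, true)))))
        = ∏ w, ∏ b, ψ t (w, b) (E (σ (w, b))) := by
          refine Finset.prod_congr rfl fun w _ => ?_
          rw [Fintype.prod_bool]
          simp only [ψ]
          norm_num [mul_comm]
      _ = ∏ q : Fin r × Bool, ψ t q (E (σ q)) :=
          (Fintype.prod_prod_type (f := fun q : Fin r × Bool => ψ t q (E (σ q)))).symm
      _ = ∏ q : Fin r × Bool, ψ t (σ.symm q) (E q) := by
          rw [← Equiv.prod_comp σ (fun q => ψ t (σ.symm q) (E q))]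
          simp
      _ = ∏ w, (ψ t (σ.symm (w, false)) (E (w, false)) * ψ t (σ.symm (w, true)) (E (w, true))) := by
          rw [Fintype.prod_prod_type (f := fun q : Fin r × Bool => ψ t (σ.symm q) (E q))]
          exact Finset.prod_congr rfl fun w _ => by rw [Fintype.prod_bool, mul_comm]
      _ = u t x * v t y := by
          rw [Finset.prod_mul_distrib]
          rfl
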